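/- Let x ∈ ℂ with x ∉ {±2} and x² ≠ μ, let λ be a root of λ² - xλ + 1 = 0, and suppose a bi-infinite sequence (yₙ) satisfies the recursion yₙ₊₁ = x·yₙ - yₙ₋₁ together with the constraint that (x, yₙ, yₙ₊₁) is a μ-Markoff triple for all n. Then there exist constants A, B ∈ ℂ with AB = (x² - μ)/(x² - 4) such that yₙ = Aλⁿ + Bλ⁻ⁿ for all n ∈ ℤ. -/

import Mathlib

theorem neighbor_sequence_form (μ x l : ℂ) (y : ℤ → ℂ)
    (hx2 : x ≠ 2) (hx2' : x ≠ -2) (hxμ : x ^ 2 ≠ μ)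
    (hl : l ^ 2 - x * l + 1 = 0)
    (hrec : ∀ n : ℤ, y (n + 1) = x * y n - y (n - 1))
    (hmar : ∀ n : ℤ,
      x ^ 2 + (y n) ^ 2 + (y (n + 1)) ^ 2 - x * y n * y (n + 1) = μ) :
    ∃ A B : ℂ, A * B = (x ^ 2 - μ) / (x ^ 2 - 4) ∧
      ∀ n : ℤ, y n = A * l ^ n + B * l ^ (-n) := by
  have hl0 : l ≠ 0 := by
    intro h; rw [h] at hl; norm_num at hl
  have hD2 : l ^ 2 - 1 ≠ 0 := by
    intro h
    have hfac : (l - 1) * (l + 1) = 0 := by linear_combination h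
    rcases mul_eq_zero.mp hfac with h1 | h1
    · have hl1 : l = 1 := by linear_combination h1
      rw [hl1] at hl
      exact hx2 (by linear_combination -hl)
    · have hl1 : l = -1 := by linear_combination h1
      rw [hl1] at hl
      exact hx2' (by linear_combination hl)
  obtain ⟨A, B, hy0, hy1⟩ : ∃ A B : ℂ, y 0 = A + B ∧ y 1 = A * l + B * l⁻¹ := by
    refine ⟨(y 1 * l - y 0) / (l ^ 2 - 1), y 0 - (y 1 * l - y 0) / (l ^ 2 - 1), by ring, ?_⟩
    field_simp
    ring
  have hx : x = l + l⁻¹ := by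
    field_simp
    linear_combination -hl
  have hu : l * l⁻¹ = 1 := mul_inv_cancel₀ hl0
  have hf : ∀ n : ℤ, A * l ^ (n + 1) + B * l ^ (-(n + 1)) =
      x * (A * l ^ n + B * l ^ (-n)) - (A * l ^ (n - 1) + B * l ^ (-(n - 1))) := by
    intro n
    have e1 : l ^ (n + 1) = l ^ n * l := by rw [zpow_add₀ hl0, zpow_one]
    have e2 : l ^ (-(n + 1)) = l ^ (-n) * l⁻¹ := by
      rw [show -(n+1) = -n + (-1) by ring, zpow_add₀ hl0, zpow_neg_one]
    have e3 : l ^ (n - 1) = l ^ n * l⁻¹ := by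
      rw [show n - 1 = n + (-1) by ring, zpow_add₀ hl0, zpow_neg_one]
    have e4 : l ^ (-(n - 1)) = l ^ (-n) * l := by
      rw [show -(n-1) = -n + 1 by ring, zpow_add₀ hl0, zpow_one]
    rw [e1, e2, e3, e4, hx]
    ring
  have key : ∀ n : ℤ, y n = A * l ^ n + B * l ^ (-n) ∧
      y (n + 1) = A * l ^ (n + 1) + B * l ^ (-(n + 1)) := by
    intro n
    induction n using Int.induction_on with
    | zero =>
      constructor
      · simpa using hy0
      · simpa [zpow_one] using hy1
    | succ k ih =>
      refine ⟨ih.2, ?_⟩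
      have hr := hrec (k + 1)
      rw [show ((k : ℤ) + 1) - 1 = k by ring] at hr
      have hff := hf (k + 1)
      rw [show ((k : ℤ) + 1) - 1 = k by ring] at hff
      rw [hr, ih.1, ih.2, hff]
    | pred k ih =>
      have e : (-(k : ℤ) - 1) + 1 = -k := by ring
      refine ⟨?_, by rw [e]; exact ih.1⟩
      have hr := hrec (-(k : ℤ))
      have hff := hf (-(k : ℤ))
      linear_combination hr - hff - ih.2 + x * ih.1
  have hx4 : x ^ 2 - 4 ≠ 0 := by
    intro h
    have : (x - 2) * (x + 2) = 0 := by linear_combination h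
    rcases mul_eq_zero.mp this with h1 | h1
    · exact hx2 (by linear_combination h1)
    · exact hx2' (by linear_combination h1)
  refine ⟨A, B, ?_, fun n => (key n).1⟩
  rw [eq_div_iff hx4]
  have hm := hmar 0
  rw [show (0 : ℤ) + 1 = 1 by norm_num, hy0, hy1] at hm
  rw [hx] at hm ⊢
  linear_combination -hm - (A - B) ^ 2 * hu
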